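/- Let (M,d) be a Polish metric space, ℓ a time-separation function on M, and q ∈ (0,1]. Define ℓ_q(μ,ν) := inf over causal couplings γ ∈ Γ_≤(μ,ν) of -(∫ |ℓ(x,y)|^q dγ)^{1/q}, with ℓ_q(μ,ν) = +∞ if no causal coupling exists. Then ℓ_q satisfies the triangle inequality: ℓ_q(μ₀,μ₂) ≤ ℓ_q(μ₀,μ₁) + ℓ_q(μ₁,μ₂) whenever both terms on the right are finite. -/

import Mathlib

open Set MeasureTheory
open scoped ENNReal

/-- A causal coupling of μ and ν: a coupling giving full mass to {ℓ ≤ 0}. -/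
def IsCausalCoupling {M : Type*} [MeasurableSpace M] (ℓ : M → M → EReal)
    (μ ν : Measure M) (γ : Measure (M × M)) : Prop :=
  γ.map Prod.fst = μ ∧ γ.map Prod.snd = ν ∧ γ {p : M × M | ℓ p.1 p.2 ≤ 0} = 1

/-- The cost `-(∫ |ℓ|^q dγ)^{1/q}` of a coupling γ, valued in EReal. -/
noncomputable def lqCost {M : Type*} [MeasurableSpace M] (ℓ : M → M → EReal)
    (q : ℝ) (γ : Measure (M × M)) : EReal :=
  -((((∫⁻ p, (ENNReal.ofReal (-(ℓ p.1 p.2)).toReal) ^ q ∂γ) ^ (1 / q) : ℝ≥0∞) : EReal))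

/-- The q-Lorentz–Wasserstein time separation `ℓ_q(μ,ν)`; it equals `+∞` when no
causal coupling exists. -/
noncomputable def lqSep {M : Type*} [MeasurableSpace M] (ℓ : M → M → EReal)
    (q : ℝ) (μ ν : Measure M) : EReal :=
  sInf {v : EReal | ∃ γ : Measure (M × M), IsCausalCoupling ℓ μ ν γ ∧ v = lqCost ℓ q γ}


open ProbabilityTheory


lemma real_eq_aux {q u v : ℝ} (hq0 : 0 < q) (hu : 0 < u) (hv : 0 < v) :
    (u/(u+v))^(1-q) * u^q + (v/(u+v))^(1-q) * v^q = (u+v)^q := by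
  have hs : 0 < u + v := by linarith
  rw [Real.div_rpow hu.le hs.le, Real.div_rpow hv.le hs.le]
  rw [div_mul_eq_mul_div, div_mul_eq_mul_div, ← Real.rpow_add hu, ← Real.rpow_add hv]
  have h1 : 1 - q + q = 1 := by ring
  rw [h1, Real.rpow_one, Real.rpow_one, ← add_div,
    div_eq_iff (Real.rpow_pos_of_pos hs (1-q)).ne', ← Real.rpow_add hs]
  norm_num

lemma real_concave_aux {q : ℝ} (hq0 : 0 < q) (hq1 : q ≤ 1) {a b l : ℝ} (ha : 0 ≤ a) (hb : 0 ≤ b)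
    (hl0 : 0 ≤ l) (hl1 : l ≤ 1) :
    l^(1-q) * a^q + (1-l)^(1-q) * b^q ≤ (a+b)^q := by
  rcases eq_or_lt_of_le (by linarith : (0:ℝ) ≤ a + b) with hs | hs
  · have ha0 : a = 0 := by linarith
    have hb0 : b = 0 := by linarith
    simp [ha0, hb0, Real.zero_rpow hq0.ne']
  · have hsne : a + b ≠ 0 := hs.ne'
    have key1 : (a/(a+b))^q * l^(1-q) ≤ q * (a/(a+b)) + (1-q) * l :=
      Real.geom_mean_le_arith_mean2_weighted hq0.le (by linarith) (by positivity) hl0 (by ring)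
    have key2 : (b/(a+b))^q * (1-l)^(1-q) ≤ q * (b/(a+b)) + (1-q) * (1-l) :=
      Real.geom_mean_le_arith_mean2_weighted hq0.le (by linarith) (by positivity) (by linarith) (by ring)
    have hrw1 : l^(1-q) * a^q = (a+b)^q * ((a/(a+b))^q * l^(1-q)) := by
      rw [Real.div_rpow ha hs.le]
      field_simp [(Real.rpow_pos_of_pos hs q).ne']
    have hrw2 : (1-l)^(1-q) * b^q = (a+b)^q * ((b/(a+b))^q * (1-l)^(1-q)) := by
      rw [Real.div_rpow hb hs.le]
      field_simp [(Real.rpow_pos_of_pos hs q).ne']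
    have hsp : (0:ℝ) ≤ (a+b)^q := (Real.rpow_pos_of_pos hs q).le
    have hone : q * (a/(a+b)) + (1-q) * l + (q * (b/(a+b)) + (1-q) * (1-l)) = 1 := by
      field_simp
      ring
    calc l^(1-q) * a^q + (1-l)^(1-q) * b^q
        ≤ (a+b)^q * ((q * (a/(a+b)) + (1-q) * l) + (q * (b/(a+b)) + (1-q) * (1-l))) := by
          rw [hrw1, hrw2, ← mul_add]
          exact mul_le_mul_of_nonneg_left (add_le_add key1 key2) hsp
      _ = (a+b)^q := by rw [hone, mul_one]

lemma ennreal_concave_aux {q : ℝ} (hq0 : 0 < q) (hq1 : q ≤ 1) (a b : ℝ≥0∞) {l : ℝ}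
    (hl0 : 0 ≤ l) (hl1 : l ≤ 1) :
    ENNReal.ofReal (l^(1-q)) * a^q + ENNReal.ofReal ((1-l)^(1-q)) * b^q ≤ (a+b)^q := by
  have hlq : (0:ℝ) ≤ l^(1-q) := Real.rpow_nonneg hl0 _
  have h1lq : (0:ℝ) ≤ (1-l)^(1-q) := Real.rpow_nonneg (by linarith) _
  rcases eq_or_ne a ⊤ with rfl | ha
  · rw [top_add, ENNReal.top_rpow_of_pos hq0]; exact le_top
  rcases eq_or_ne b ⊤ with rfl | hb
  · rw [add_top, ENNReal.top_rpow_of_pos hq0]; exact le_top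
  have hA : a = ENNReal.ofReal a.toReal := (ENNReal.ofReal_toReal ha).symm
  have hB : b = ENNReal.ofReal b.toReal := (ENNReal.ofReal_toReal hb).symm
  rw [hA, hB, ← ENNReal.ofReal_add a.toReal_nonneg b.toReal_nonneg,
    ENNReal.ofReal_rpow_of_nonneg a.toReal_nonneg hq0.le,
    ENNReal.ofReal_rpow_of_nonneg b.toReal_nonneg hq0.le,
    ENNReal.ofReal_rpow_of_nonneg (by positivity) hq0.le,
    ← ENNReal.ofReal_mul (by positivity), ← ENNReal.ofReal_mul (by positivity),
    ← ENNReal.ofReal_add (by positivity) (by positivity)]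
  exact ENNReal.ofReal_le_ofReal
    (real_concave_aux hq0 hq1 a.toReal_nonneg b.toReal_nonneg hl0 hl1)

/-- Reverse Minkowski inequality for `0 < q ≤ 1`. -/
lemma rev_minkowski {α : Type*} [MeasurableSpace α] (θ : Measure α) {q : ℝ}
    (hq0 : 0 < q) (hq1 : q ≤ 1) {f g : α → ℝ≥0∞} (hf : Measurable f) (hg : Measurable g) :
    (∫⁻ x, f x ^ q ∂θ) ^ (1/q) + (∫⁻ x, g x ^ q ∂θ) ^ (1/q)
      ≤ (∫⁻ x, (f x + g x) ^ q ∂θ) ^ (1/q) := by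
  set A := ∫⁻ x, f x ^ q ∂θ with hA
  set B := ∫⁻ x, g x ^ q ∂θ with hB
  set C := ∫⁻ x, (f x + g x) ^ q ∂θ with hC
  have hql : 0 < 1/q := by positivity
  have hAC : A ≤ C := lintegral_mono fun x => ENNReal.rpow_le_rpow le_self_add hq0.le
  have hBC : B ≤ C := lintegral_mono fun x => ENNReal.rpow_le_rpow le_add_self hq0.le
  rcases eq_or_ne A 0 with hA0 | hA0
  · rw [hA0, ENNReal.zero_rpow_of_pos hql, zero_add]
    exact ENNReal.rpow_le_rpow hBC hql.le
  rcases eq_or_ne B 0 with hB0 | hB0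
  · rw [hB0, ENNReal.zero_rpow_of_pos hql, add_zero]
    exact ENNReal.rpow_le_rpow hAC hql.le
  rcases eq_or_ne A ⊤ with hAt | hAt
  · have : C = ⊤ := top_le_iff.mp (hAt ▸ hAC)
    rw [this, ENNReal.top_rpow_of_pos hql]; exact le_top
  rcases eq_or_ne B ⊤ with hBt | hBt
  · have : C = ⊤ := top_le_iff.mp (hBt ▸ hBC)
    rw [this, ENNReal.top_rpow_of_pos hql]; exact le_top
  -- main case
  set NA := A ^ (1/q) with hNA
  set NB := B ^ (1/q) with hNB
  have hNAt : NA ≠ ⊤ := ENNReal.rpow_ne_top_of_nonneg hql.le hAt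
  have hNBt : NB ≠ ⊤ := ENNReal.rpow_ne_top_of_nonneg hql.le hBt
  have hNA0 : NA ≠ 0 := by
    simp only [hNA, ne_eq, ENNReal.rpow_eq_zero_iff]
    push_neg
    exact ⟨fun h => absurd h hA0, fun h => absurd h hAt⟩
  have hNB0 : NB ≠ 0 := by
    simp only [hNB, ne_eq, ENNReal.rpow_eq_zero_iff]
    push_neg
    exact ⟨fun h => absurd h hB0, fun h => absurd h hBt⟩
  set u := NA.toReal with hu
  set v := NB.toReal with hv
  have hu0 : 0 < u := ENNReal.toReal_pos hNA0 hNAt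
  have hv0 : 0 < v := ENNReal.toReal_pos hNB0 hNBt
  set l := u / (u + v) with hl
  have huv : 0 < u + v := by linarith
  have hl0 : 0 ≤ l := by positivity
  have hl1 : l ≤ 1 := by rw [hl, div_le_one huv]; linarith
  have h1l : 1 - l = v / (u + v) := by rw [hl]; field_simp; ring
  -- A = ofReal (u^q), etc.
  have hAr : A = ENNReal.ofReal (u ^ q) := by
    rw [← ENNReal.ofReal_rpow_of_nonneg hu0.le hq0.le, hu, ENNReal.ofReal_toReal hNAt, hNA,
      ← ENNReal.rpow_mul, one_div, inv_mul_cancel₀ hq0.ne', ENNReal.rpow_one]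
  have hBr : B = ENNReal.ofReal (v ^ q) := by
    rw [← ENNReal.ofReal_rpow_of_nonneg hv0.le hq0.le, hv, ENNReal.ofReal_toReal hNBt, hNB,
      ← ENNReal.rpow_mul, one_div, inv_mul_cancel₀ hq0.ne', ENNReal.rpow_one]
  have hlq : (0:ℝ) ≤ l^(1-q) := Real.rpow_nonneg hl0 _
  have h1lq : (0:ℝ) ≤ (1-l)^(1-q) := Real.rpow_nonneg (by linarith) _
  -- key integral inequality
  have key : ENNReal.ofReal (l^(1-q)) * A + ENNReal.ofReal ((1-l)^(1-q)) * B ≤ C := by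
    rw [hA, hB, ← lintegral_const_mul' _ _ ENNReal.ofReal_ne_top,
      ← lintegral_const_mul' _ _ ENNReal.ofReal_ne_top, ← lintegral_add_left']
    · exact lintegral_mono fun x => ennreal_concave_aux hq0 hq1 (f x) (g x) hl0 hl1
    · fun_prop
  -- (NA + NB)^q equals the LHS of key
  have hsum : (NA + NB) ^ q = ENNReal.ofReal (l^(1-q)) * A + ENNReal.ofReal ((1-l)^(1-q)) * B := by
    have hNAr : NA = ENNReal.ofReal u := (ENNReal.ofReal_toReal hNAt).symm
    have hNBr : NB = ENNReal.ofReal v := (ENNReal.ofReal_toReal hNBt).symm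
    rw [hNAr, hNBr, ← ENNReal.ofReal_add hu0.le hv0.le,
      ENNReal.ofReal_rpow_of_nonneg (by positivity) hq0.le, hAr, hBr,
      ← ENNReal.ofReal_mul (by positivity), ← ENNReal.ofReal_mul (by positivity),
      ← ENNReal.ofReal_add (by positivity) (by positivity)]
    congr 1
    rw [h1l, hl]
    exact (real_eq_aux hq0 hu0 hv0).symm
  calc NA + NB = ((NA + NB) ^ q) ^ (1/q) := by
        rw [← ENNReal.rpow_mul, mul_one_div, div_self hq0.ne', ENNReal.rpow_one]
    _ ≤ C ^ (1/q) := ENNReal.rpow_le_rpow (hsum ▸ key) hql.le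

lemma ereal_pt {x y z : EReal} (hx : x ≤ 0) (hy : y ≤ 0) (hz : z ≤ x + y)
    (hxb : x ≠ ⊥) (hyb : y ≠ ⊥) (hzb : z ≠ ⊥) :
    z ≤ 0 ∧ ENNReal.ofReal (-x).toReal + ENNReal.ofReal (-y).toReal
      ≤ ENNReal.ofReal (-z).toReal := by
  have hxt : x ≠ ⊤ := (lt_of_le_of_lt hx (by norm_num : (0:EReal) < ⊤)).ne
  have hyt : y ≠ ⊤ := (lt_of_le_of_lt hy (by norm_num : (0:EReal) < ⊤)).ne
  have hzt : z ≠ ⊤ := by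
    intro h
    rw [h] at hz
    have h0 : x + y ≤ 0 := add_nonpos hx hy
    have : (⊤ : EReal) ≤ 0 := hz.trans h0
    norm_num at this
  set a := x.toReal with ha
  set b := y.toReal with hb
  set c := z.toReal with hc
  have hxa : x = (a : EReal) := (EReal.coe_toReal hxt hxb).symm
  have hyb' : y = (b : EReal) := (EReal.coe_toReal hyt hyb).symm
  have hzc : z = (c : EReal) := (EReal.coe_toReal hzt hzb).symm
  rw [hxa] at hx hz; rw [hyb'] at hy hz; rw [hzc] at hz ⊢
  rw [← EReal.coe_add] at hz
  have ha0 : a ≤ 0 := EReal.coe_nonpos.mp hx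
  have hb0 : b ≤ 0 := EReal.coe_nonpos.mp hy
  have hcab : c ≤ a + b := EReal.coe_le_coe_iff.mp hz
  refine ⟨EReal.coe_nonpos.mpr (by linarith), ?_⟩
  rw [hxa, hyb', ← EReal.coe_neg, ← EReal.coe_neg, ← EReal.coe_neg,
    EReal.toReal_coe, EReal.toReal_coe, EReal.toReal_coe,
    ← ENNReal.ofReal_add (by linarith) (by linarith)]
  exact ENNReal.ofReal_le_ofReal (by linarith)

lemma glue {M : Type*} [MetricSpace M] [TopologicalSpace.SeparableSpace M] [CompleteSpace M]
    [MeasurableSpace M] [BorelSpace M]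
    (ℓ : M → M → EReal)
    (htri : ∀ x y z, ℓ x y < ⊤ → ℓ y z < ⊤ → ℓ x z ≤ ℓ x y + ℓ y z)
    (hnobot : ∀ x y, ℓ x y ≠ ⊥)
    (hmeas : Measurable fun p : M × M => ℓ p.1 p.2)
    (q : ℝ) (hq0 : 0 < q) (hq1 : q ≤ 1)
    (μ0 μ1 μ2 : Measure M)
    [IsProbabilityMeasure μ0] [IsProbabilityMeasure μ1] [IsProbabilityMeasure μ2]
    (γ01 γ12 : Measure (M × M))
    (h01 : IsCausalCoupling ℓ μ0 μ1 γ01) (h12 : IsCausalCoupling ℓ μ1 μ2 γ12) :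
    ∃ γ02 : Measure (M × M), IsCausalCoupling ℓ μ0 μ2 γ02 ∧
      lqCost ℓ q γ02 ≤ lqCost ℓ q γ01 + lqCost ℓ q γ12 := by
  haveI : Nonempty M := by
    by_contra h
    rw [not_nonempty_iff] at h
    have h1 := measure_univ (μ := μ0)
    rw [Set.univ_eq_empty_iff.mpr h, measure_empty] at h1
    exact zero_ne_one h1
  haveI : IsProbabilityMeasure γ01 := by
    constructor
    have := congrArg (fun m : Measure M => m univ) h01.1
    simpa [Measure.map_apply measurable_fst MeasurableSet.univ] using this
  haveI : IsProbabilityMeasure γ12 := by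
    constructor
    have := congrArg (fun m : Measure M => m univ) h12.1
    simpa [Measure.map_apply measurable_fst MeasurableSet.univ] using this
  set γ01' := γ01.map Prod.swap with hγ01'
  haveI : IsProbabilityMeasure γ01' := Measure.isProbabilityMeasure_map measurable_swap.aemeasurable
  have hfst' : γ01'.fst = μ1 := by
    rw [hγ01', Measure.fst_map_swap]
    exact h01.2.1
  have hfst12 : γ12.fst = μ1 := h12.1
  set κ := γ01'.condKernel with hκdef
  set η := γ12.condKernel with hηdef
  have hκ : μ1 ⊗ₘ κ = γ01' := by rw [← hfst']; exact γ01'.disintegrate _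
  have hη : μ1 ⊗ₘ η = γ12 := by rw [← hfst12]; exact γ12.disintegrate _
  set θ := μ1 ⊗ₘ (κ ×ₖ η) with hθdef
  haveI : IsProbabilityMeasure θ := by infer_instance
  have hm1 : Measurable (fun p : M × M × M => (p.1, p.2.1)) :=
    measurable_fst.prodMk (measurable_fst.comp measurable_snd)
  have hm2 : Measurable (fun p : M × M × M => (p.1, p.2.2)) :=
    measurable_fst.prodMk (measurable_snd.comp measurable_snd)
  have hmap1 : θ.map (fun p : M × M × M => (p.1, p.2.1)) = γ01' := by
    rw [← hκ]
    ext s hs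
    rw [Measure.map_apply hm1 hs, Measure.compProd_apply (hm1 hs), Measure.compProd_apply hs]
    refine lintegral_congr fun y => ?_
    have hset : (Prod.mk y ⁻¹' ((fun p : M × M × M => (p.1, p.2.1)) ⁻¹' s))
        = (Prod.mk y ⁻¹' s) ×ˢ univ := by
      ext w; simp
    rw [hset, Kernel.prod_apply, Measure.prod_prod, measure_univ, mul_one]
  have hmap2 : θ.map (fun p : M × M × M => (p.1, p.2.2)) = γ12 := by
    rw [← hη]
    ext s hs
    rw [Measure.map_apply hm2 hs, Measure.compProd_apply (hm2 hs), Measure.compProd_apply hs]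
    refine lintegral_congr fun y => ?_
    have hset : (Prod.mk y ⁻¹' ((fun p : M × M × M => (p.1, p.2.2)) ⁻¹' s))
        = univ ×ˢ (Prod.mk y ⁻¹' s) := by
      ext w; simp
    rw [hset, Kernel.prod_apply, Measure.prod_prod, measure_univ, one_mul]
  set γ02 := θ.map Prod.snd with hγ02
  -- a.e. facts
  have hS : MeasurableSet {w : M × M | ℓ w.1 w.2 ≤ 0} :=
    measurableSet_le hmeas measurable_const
  have hS' : MeasurableSet {w : M × M | ℓ w.2 w.1 ≤ 0} :=
    measurableSet_le (hmeas.comp measurable_swap) measurable_const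
  have hγ01'S : γ01' {w : M × M | ℓ w.2 w.1 ≤ 0} = 1 := by
    rw [hγ01', Measure.map_apply measurable_swap hS']
    have hpre : Prod.swap ⁻¹' {w : M × M | ℓ w.2 w.1 ≤ 0} = {p : M × M | ℓ p.1 p.2 ≤ 0} := by
      ext p; simp
    rw [hpre]; exact h01.2.2
  have hθ1 : θ {p : M × M × M | ℓ p.2.1 p.1 ≤ 0} = 1 := by
    have h := Measure.map_apply (μ := θ) hm1 hS'
    rw [hmap1, hγ01'S] at h
    exact h.symm
  have hθ2 : θ {p : M × M × M | ℓ p.1 p.2.2 ≤ 0} = 1 := by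
    have h := Measure.map_apply (μ := θ) hm2 hS
    rw [hmap2, h12.2.2] at h
    exact h.symm
  have h01ae : ∀ᵐ p ∂θ, ℓ p.2.1 p.1 ≤ 0 := by
    rw [ae_iff]
    have hc : {p : M × M × M | ¬ ℓ p.2.1 p.1 ≤ 0} = {p : M × M × M | ℓ p.2.1 p.1 ≤ 0}ᶜ := rfl
    have hms : MeasurableSet {p : M × M × M | ℓ p.2.1 p.1 ≤ 0} := hm1 hS'
    rw [hc, measure_compl hms (measure_ne_top _ _), hθ1, measure_univ, tsub_self]
  have h12ae : ∀ᵐ p ∂θ, ℓ p.1 p.2.2 ≤ 0 := by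
    rw [ae_iff]
    have hc : {p : M × M × M | ¬ ℓ p.1 p.2.2 ≤ 0} = {p : M × M × M | ℓ p.1 p.2.2 ≤ 0}ᶜ := rfl
    have hms : MeasurableSet {p : M × M × M | ℓ p.1 p.2.2 ≤ 0} := hm2 hS
    rw [hc, measure_compl hms (measure_ne_top _ _), hθ2, measure_univ, tsub_self]
  have hmain : ∀ᵐ p ∂θ, ℓ p.2.1 p.2.2 ≤ 0 ∧
      ENNReal.ofReal (-(ℓ p.2.1 p.1)).toReal + ENNReal.ofReal (-(ℓ p.1 p.2.2)).toReal
        ≤ ENNReal.ofReal (-(ℓ p.2.1 p.2.2)).toReal := by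
    filter_upwards [h01ae, h12ae] with p h1 h2
    have hlt1 : ℓ p.2.1 p.1 < ⊤ := lt_of_le_of_lt h1 (by norm_num)
    have hlt2 : ℓ p.1 p.2.2 < ⊤ := lt_of_le_of_lt h2 (by norm_num)
    exact ereal_pt h1 h2 (htri _ _ _ hlt1 hlt2) (hnobot _ _) (hnobot _ _) (hnobot _ _)
  refine ⟨γ02, ⟨?_, ?_, ?_⟩, ?_⟩
  · -- fst marginal is μ0
    rw [hγ02, Measure.map_map measurable_fst measurable_snd]
    have : (Prod.fst ∘ Prod.snd : M × M × M → M)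
        = Prod.snd ∘ (fun p : M × M × M => (p.1, p.2.1)) := rfl
    rw [this, ← Measure.map_map measurable_snd hm1, hmap1]
    have : γ01'.map Prod.snd = γ01'.snd := rfl
    rw [this, hγ01', Measure.snd_map_swap]
    exact h01.1
  · -- snd marginal is μ2
    rw [hγ02, Measure.map_map measurable_snd measurable_snd]
    have : (Prod.snd ∘ Prod.snd : M × M × M → M)
        = Prod.snd ∘ (fun p : M × M × M => (p.1, p.2.2)) := rfl
    rw [this, ← Measure.map_map measurable_snd hm2, hmap2]
    exact h12.2.1
  · -- causality
    rw [hγ02, Measure.map_apply measurable_snd hS]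
    have hpre : (Prod.snd ⁻¹' {w : M × M | ℓ w.1 w.2 ≤ 0})
        = {p : M × M × M | ℓ p.2.1 p.2.2 ≤ 0} := rfl
    rw [hpre]
    have hms : MeasurableSet {p : M × M × M | ℓ p.2.1 p.2.2 ≤ 0} := measurable_snd hS
    have hcompl : θ {p : M × M × M | ℓ p.2.1 p.2.2 ≤ 0}ᶜ = 0 := by
      have := ae_iff.mp (hmain.mono fun p hp => hp.1)
      exact this
    have hsum := measure_add_measure_compl (μ := θ) hms
    rw [hcompl, add_zero, measure_univ] at hsum
    exact hsum
  · -- cost inequality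
    set F : M × M → ℝ≥0∞ := fun w => ENNReal.ofReal (-(ℓ w.1 w.2)).toReal with hFdef
    have hF : Measurable F := by
      have h1 : Measurable fun w : M × M => (ℓ w.1 w.2).toReal :=
        (by measurability : Measurable EReal.toReal).comp hmeas
      have : F = fun w => ENNReal.ofReal (-(ℓ w.1 w.2).toReal) := by
        funext w; rw [hFdef]; simp [EReal.toReal_neg]
      rw [this]
      exact h1.neg.ennreal_ofReal
    have hfm : Measurable fun p : M × M × M => F (p.2.1, p.1) :=
      hF.comp ((measurable_fst.comp measurable_snd).prodMk measurable_fst)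
    have hgm : Measurable fun p : M × M × M => F (p.1, p.2.2) := hF.comp hm2
    have hint1 : ∫⁻ p, F (p.2.1, p.1) ^ q ∂θ = ∫⁻ w, F w ^ q ∂γ01 := by
      have hi : Measurable fun w : M × M => F (w.2, w.1) ^ q := by fun_prop
      have e1 := lintegral_map (μ := θ) hi hm1
      rw [hmap1] at e1
      have e2 := lintegral_map (μ := γ01) hi measurable_swap
      rw [← hγ01'] at e2
      rw [← e1, e2]
      rfl
    have hint2 : ∫⁻ p, F (p.1, p.2.2) ^ q ∂θ = ∫⁻ w, F w ^ q ∂γ12 := by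
      have hi : Measurable fun w : M × M => F w ^ q := by fun_prop
      have e1 := lintegral_map (μ := θ) hi hm2
      rw [hmap2] at e1
      exact e1.symm
    have hint02 : ∫⁻ w, F w ^ q ∂γ02 = ∫⁻ p, F p.2 ^ q ∂θ := by
      have hi : Measurable fun w : M × M => F w ^ q := by fun_prop
      rw [hγ02]
      exact lintegral_map hi measurable_snd
    have key := rev_minkowski θ hq0 hq1 hfm hgm
    have mono : ∫⁻ p, (F (p.2.1, p.1) + F (p.1, p.2.2)) ^ q ∂θ ≤ ∫⁻ p, F p.2 ^ q ∂θ :=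
      lintegral_mono_ae (hmain.mono fun p hp => ENNReal.rpow_le_rpow hp.2 hq0.le)
    have hX : (∫⁻ w, F w ^ q ∂γ01) ^ (1/q) + (∫⁻ w, F w ^ q ∂γ12) ^ (1/q)
        ≤ (∫⁻ w, F w ^ q ∂γ02) ^ (1/q) := by
      rw [← hint1, ← hint2, hint02]
      exact key.trans (ENNReal.rpow_le_rpow mono (by positivity))
    show lqCost ℓ q γ02 ≤ lqCost ℓ q γ01 + lqCost ℓ q γ12
    have hcost : ∀ γ : Measure (M × M),
        lqCost ℓ q γ = -((((∫⁻ w, F w ^ q ∂γ) ^ (1/q) : ℝ≥0∞)) : EReal) := fun γ => rfl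
    rw [hcost, hcost, hcost]
    have hadd : -(((∫⁻ w, F w ^ q ∂γ01) ^ (1/q) : ℝ≥0∞) : EReal)
        + -(((∫⁻ w, F w ^ q ∂γ12) ^ (1/q) : ℝ≥0∞) : EReal)
        = -((((∫⁻ w, F w ^ q ∂γ01) ^ (1/q) + (∫⁻ w, F w ^ q ∂γ12) ^ (1/q) : ℝ≥0∞)) : EReal) := by
      rw [EReal.coe_ennreal_add,
        EReal.neg_add (Or.inl (EReal.coe_ennreal_ne_bot _)) (Or.inr (EReal.coe_ennreal_ne_bot _)),
        sub_eq_add_neg]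
    rw [hadd]
    exact EReal.neg_le_neg_iff.mpr (EReal.coe_ennreal_le_coe_ennreal_iff.mpr hX)

/-- on a Polish space, ℓ_q satisfies the triangle inequality
whenever both summands on the right are finite. -/
theorem stmt13 {M : Type*} [MetricSpace M] [TopologicalSpace.SeparableSpace M] [CompleteSpace M]
    [MeasurableSpace M] [BorelSpace M]
    (ℓ : M → M → EReal)
    (hrange : ∀ x y, ℓ x y ≤ 0 ∨ ℓ x y = ⊤)
    (hrefl : ∀ x, ℓ x x ≤ 0)
    (htri : ∀ x y z, ℓ x y < ⊤ → ℓ y z < ⊤ → ℓ x z ≤ ℓ x y + ℓ y z)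
    (hnobot : ∀ x y, ℓ x y ≠ ⊥)
    (hmeas : Measurable fun p : M × M => ℓ p.1 p.2)
    (q : ℝ) (hq0 : 0 < q) (hq1 : q ≤ 1)
    (μ0 μ1 μ2 : Measure M)
    [IsProbabilityMeasure μ0] [IsProbabilityMeasure μ1] [IsProbabilityMeasure μ2]
    (h01 : lqSep ℓ q μ0 μ1 ≠ ⊤) (h12 : lqSep ℓ q μ1 μ2 ≠ ⊤) :
    lqSep ℓ q μ0 μ2 ≤ lqSep ℓ q μ0 μ1 + lqSep ℓ q μ1 μ2 := by
  classical
  set A := {v : EReal | ∃ γ : Measure (M × M), IsCausalCoupling ℓ μ0 μ1 γ ∧ v = lqCost ℓ q γ}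
    with hA
  set B := {v : EReal | ∃ γ : Measure (M × M), IsCausalCoupling ℓ μ1 μ2 γ ∧ v = lqCost ℓ q γ}
    with hB
  have hsepA : lqSep ℓ q μ0 μ1 = sInf A := rfl
  have hsepB : lqSep ℓ q μ1 μ2 = sInf B := rfl
  have hAne : A.Nonempty := by
    by_contra h
    rw [Set.not_nonempty_iff_eq_empty] at h
    exact h01 (by rw [hsepA, h, sInf_empty])
  have hBne : B.Nonempty := by
    by_contra h
    rw [Set.not_nonempty_iff_eq_empty] at h
    exact h12 (by rw [hsepB, h, sInf_empty])
  have hcost_nonpos : ∀ (γ : Measure (M × M)), lqCost ℓ q γ ≤ 0 := fun γ => by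
    rw [lqCost, ← neg_zero]
    exact EReal.neg_le_neg_iff.mpr (EReal.coe_ennreal_nonneg _)
  have hkey : ∀ a ∈ A, ∀ b ∈ B, lqSep ℓ q μ0 μ2 ≤ a + b := by
    rintro a ⟨γ01, hγ01, rfl⟩ b ⟨γ12, hγ12, rfl⟩
    obtain ⟨γ02, hc, hle⟩ := glue ℓ htri hnobot hmeas q hq0 hq1 μ0 μ1 μ2 γ01 γ12 hγ01 hγ12
    exact le_trans (sInf_le ⟨γ02, hc, rfl⟩) hle
  rw [hsepA, hsepB]
  rcases eq_or_ne (sInf A) ⊥ with hAbot | hAbot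
  · rw [hAbot, EReal.bot_add]
    obtain ⟨b, hb⟩ := hBne
    have hb0 : b ≤ 0 := by obtain ⟨γ, _, rfl⟩ := hb; exact hcost_nonpos γ
    have : lqSep ℓ q μ0 μ2 ≤ sInf A := le_sInf fun a ha => by
      calc lqSep ℓ q μ0 μ2 ≤ a + b := hkey a ha b hb
        _ ≤ a + 0 := add_le_add_right hb0 a
        _ = a := add_zero a
    rwa [hAbot] at this
  rcases eq_or_ne (sInf B) ⊥ with hBbot | hBbot
  · rw [hBbot, EReal.add_bot]
    obtain ⟨a, ha⟩ := hAne
    have ha0 : a ≤ 0 := by obtain ⟨γ, _, rfl⟩ := ha; exact hcost_nonpos γ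
    have : lqSep ℓ q μ0 μ2 ≤ sInf B := le_sInf fun b hb => by
      calc lqSep ℓ q μ0 μ2 ≤ a + b := hkey a ha b hb
        _ ≤ 0 + b := add_le_add_left ha0 b
        _ = b := zero_add b
    rwa [hBbot] at this
  · -- both finite
    have hAtop : sInf A ≠ ⊤ := by rw [← hsepA]; exact h01
    have hBtop : sInf B ≠ ⊤ := by rw [← hsepB]; exact h12
    set s := (sInf A).toReal with hs
    set t := (sInf B).toReal with ht
    have hsA : sInf A = (s : EReal) := (EReal.coe_toReal hAtop hAbot).symm
    have htB : sInf B = (t : EReal) := (EReal.coe_toReal hBtop hBbot).symm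
    by_contra hcon
    push_neg at hcon
    rw [hsA, htB, ← EReal.coe_add] at hcon
    obtain ⟨u, hu1, hu2⟩ := EReal.exists_between_coe_real hcon
    set ε := (u - (s + t)) / 2 with hε
    have hε0 : 0 < ε := by
      have : (s + t : ℝ) < u := by exact_mod_cast hu1
      rw [hε]; linarith
    have hsa : sInf A < ((s + ε : ℝ) : EReal) := by
      rw [hsA]; exact_mod_cast (by linarith : s < s + ε)
    have htb : sInf B < ((t + ε : ℝ) : EReal) := by
      rw [htB]; exact_mod_cast (by linarith : t < t + ε)
    obtain ⟨a, ha, halt⟩ := sInf_lt_iff.mp hsa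
    obtain ⟨b, hb, hblt⟩ := sInf_lt_iff.mp htb
    have : lqSep ℓ q μ0 μ2 < lqSep ℓ q μ0 μ2 := by
      calc lqSep ℓ q μ0 μ2 ≤ a + b := hkey a ha b hb
        _ < ((s + ε : ℝ) : EReal) + ((t + ε : ℝ) : EReal) := EReal.add_lt_add halt hblt
        _ = ((u : ℝ) : EReal) := by
            rw [← EReal.coe_add]; congr 1; rw [hε]; ring
        _ < lqSep ℓ q μ0 μ2 := hu2
    exact absurd this (lt_irrefl _)
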